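/- Suppose x, y ∈ ℝ and for every prime p there is a rational q_p,ℓ decomposition such that x − y ∈ ∑_{ℓ ≠ p} ℚ·log ℓ. Then x = y. -/

import Mathlib

-- integer linear independence of logs of primes
lemma int_log_combo (s : Finset ℕ) (hs : ∀ ℓ ∈ s, ℓ.Prime) (e : ℕ → ℤ)
    (h : ∑ ℓ ∈ s, (e ℓ : ℝ) * Real.log ℓ = 0) : ∀ ℓ ∈ s, e ℓ = 0 := by
  classical
  set sp := s.filter (fun ℓ => 0 ≤ e ℓ) with hsp
  set sn := s.filter (fun ℓ => ¬ 0 ≤ e ℓ) with hsn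
  set a : ℕ := ∏ ℓ ∈ sp, ℓ ^ (e ℓ).toNat with ha
  set b : ℕ := ∏ ℓ ∈ sn, ℓ ^ (-e ℓ).toNat with hb
  have hprime : ∀ ℓ ∈ s, 0 < ℓ := fun ℓ hℓ => (hs ℓ hℓ).pos
  have hloga : Real.log a = ∑ ℓ ∈ sp, ((e ℓ).toNat : ℝ) * Real.log ℓ := by
    rw [ha, Nat.cast_prod]
    rw [Real.log_prod]
    · refine Finset.sum_congr rfl fun ℓ hℓ => ?_
      rw [Nat.cast_pow, Real.log_pow]
    · intro ℓ hℓ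
      have := hprime ℓ (Finset.mem_filter.mp hℓ).1
      positivity
  have hlogb : Real.log b = ∑ ℓ ∈ sn, (((-e ℓ)).toNat : ℝ) * Real.log ℓ := by
    rw [hb, Nat.cast_prod]
    rw [Real.log_prod]
    · refine Finset.sum_congr rfl fun ℓ hℓ => ?_
      rw [Nat.cast_pow, Real.log_pow]
    · intro ℓ hℓ
      have := hprime ℓ (Finset.mem_filter.mp hℓ).1
      positivity
  have hsum : ∑ ℓ ∈ sp, (e ℓ : ℝ) * Real.log ℓ + ∑ ℓ ∈ sn, (e ℓ : ℝ) * Real.log ℓ = 0 := by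
    rw [hsp, hsn, Finset.sum_filter_add_sum_filter_not]; exact h
  have hab : Real.log a = Real.log b := by
    rw [hloga, hlogb]
    have h1 : ∑ ℓ ∈ sp, ((e ℓ).toNat : ℝ) * Real.log ℓ = ∑ ℓ ∈ sp, (e ℓ : ℝ) * Real.log ℓ := by
      refine Finset.sum_congr rfl fun ℓ hℓ => ?_
      have h := (Finset.mem_filter.mp hℓ).2
      have : ((e ℓ).toNat : ℝ) = (e ℓ : ℝ) := by exact_mod_cast Int.toNat_of_nonneg h
      rw [this]
    have h2 : ∑ ℓ ∈ sn, (((-e ℓ)).toNat : ℝ) * Real.log ℓ = -∑ ℓ ∈ sn, (e ℓ : ℝ) * Real.log ℓ := by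
      rw [← Finset.sum_neg_distrib]
      refine Finset.sum_congr rfl fun ℓ hℓ => ?_
      have h0 := (Finset.mem_filter.mp hℓ).2
      have h0' : 0 ≤ -e ℓ := by omega
      have : (((-e ℓ)).toNat : ℝ) = -(e ℓ : ℝ) := by
        have := Int.toNat_of_nonneg h0'
        exact_mod_cast this
      rw [this]
      ring
    rw [h1, h2]
    linarith
  have hapos : 0 < a := by
    rw [ha]
    exact Finset.prod_pos fun ℓ hℓ => pow_pos (hprime ℓ (Finset.mem_filter.mp hℓ).1) _
  have hbpos : 0 < b := by
    rw [hb]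
    exact Finset.prod_pos fun ℓ hℓ => pow_pos (hprime ℓ (Finset.mem_filter.mp hℓ).1) _
  have haeqb : a = b := by
    have := Real.log_injOn_pos (Set.mem_Ioi.mpr (by exact_mod_cast hapos))
      (Set.mem_Ioi.mpr (by exact_mod_cast hbpos)) hab
    exact_mod_cast this
  -- factorizations
  have hfa : ∀ ℓ ∈ s, a.factorization ℓ = if ℓ ∈ sp then (e ℓ).toNat else 0 := by
    intro ℓ hℓ
    rw [ha, Nat.factorization_prod (fun i hi => pow_ne_zero _ (hprime i (Finset.mem_filter.mp hi).1).ne')]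
    rw [Finsupp.finset_sum_apply]
    rw [Finset.sum_congr rfl (fun i hi => by
      rw [(hs i (Finset.mem_filter.mp hi).1).factorization_pow, Finsupp.single_apply])]
    exact Finset.sum_ite_eq' sp ℓ _
  have hfb : ∀ ℓ ∈ s, b.factorization ℓ = if ℓ ∈ sn then (-e ℓ).toNat else 0 := by
    intro ℓ hℓ
    rw [hb, Nat.factorization_prod (fun i hi => pow_ne_zero _ (hprime i (Finset.mem_filter.mp hi).1).ne')]
    rw [Finsupp.finset_sum_apply]
    rw [Finset.sum_congr rfl (fun i hi => by
      rw [(hs i (Finset.mem_filter.mp hi).1).factorization_pow, Finsupp.single_apply])]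
    exact Finset.sum_ite_eq' sn ℓ _
  intro ℓ hℓ
  have key : a.factorization ℓ = b.factorization ℓ := by rw [haeqb]
  rw [hfa ℓ hℓ, hfb ℓ hℓ] at key
  by_cases hcase : 0 ≤ e ℓ
  · have h1 : ℓ ∈ sp := Finset.mem_filter.mpr ⟨hℓ, hcase⟩
    have h2 : ℓ ∉ sn := fun hc => (Finset.mem_filter.mp hc).2 hcase
    simp [h1, h2] at key
    omega
  · have h1 : ℓ ∉ sp := fun hc => hcase (Finset.mem_filter.mp hc).2
    have h2 : ℓ ∈ sn := Finset.mem_filter.mpr ⟨hℓ, hcase⟩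
    simp [h1, h2] at key
    omega

lemma rat_log_combo (s : Finset ℕ) (hs : ∀ ℓ ∈ s, Nat.Prime ℓ) (q : ℕ → ℚ)
    (h : ∑ ℓ ∈ s, (q ℓ : ℝ) * Real.log ℓ = 0) : ∀ ℓ ∈ s, q ℓ = 0 := by
  classical
  set d : ℕ := ∏ ℓ ∈ s, (q ℓ).den with hd
  have hdpos : 0 < d := Finset.prod_pos fun ℓ _ => (q ℓ).pos
  set e : ℕ → ℤ := fun ℓ => ((d : ℚ) * q ℓ).num with he
  have hkey : ∀ ℓ ∈ s, ((e ℓ : ℚ)) = (d : ℚ) * q ℓ := by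
    intro ℓ hℓ
    obtain ⟨k, hk⟩ := Finset.dvd_prod_of_mem (fun ℓ => (q ℓ).den) hℓ
    have : (d : ℚ) * q ℓ = ((q ℓ).num * k : ℤ) := by
      rw [hd, hk]
      push_cast
      have hden : ((q ℓ).den : ℚ) * q ℓ = (q ℓ).num := by rw [mul_comm, Rat.mul_den_eq_num]
      calc ((q ℓ).den : ℚ) * k * q ℓ = k * (((q ℓ).den : ℚ) * q ℓ) := by ring
        _ = ((q ℓ).num : ℚ) * k := by rw [hden]; ring
    rw [he]
    simp only [this]
    norm_cast
  have hzero : ∑ ℓ ∈ s, (e ℓ : ℝ) * Real.log ℓ = 0 := by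
    have : ∑ ℓ ∈ s, (e ℓ : ℝ) * Real.log ℓ = (d : ℝ) * ∑ ℓ ∈ s, (q ℓ : ℝ) * Real.log ℓ := by
      rw [Finset.mul_sum]
      refine Finset.sum_congr rfl fun ℓ hℓ => ?_
      have := hkey ℓ hℓ
      have h2 : (e ℓ : ℝ) = (d : ℝ) * (q ℓ : ℝ) := by exact_mod_cast congrArg (Rat.cast (K := ℝ)) this
      rw [h2]; ring
    rw [this, h, mul_zero]
  intro ℓ hℓ
  have := int_log_combo s hs e hzero ℓ hℓ
  have h2 := hkey ℓ hℓ
  rw [this] at h2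
  have hd0 : (d : ℚ) ≠ 0 := by exact_mod_cast hdpos.ne'
  field_simp at h2
  exact (mul_eq_zero.mp (by exact_mod_cast h2.symm : (d : ℚ) * q ℓ = 0)).resolve_left hd0

lemma span_rep (p : ℕ) (v : ℝ)
    (hv : v ∈ Submodule.span ℚ {r : ℝ | ∃ ℓ : ℕ, ℓ.Prime ∧ ℓ ≠ p ∧ r = Real.log ℓ}) :
    ∃ (s : Finset ℕ) (Q : ℕ → ℚ), (∀ ℓ ∈ s, ℓ.Prime ∧ ℓ ≠ p) ∧ (∀ ℓ, ℓ ∉ s → Q ℓ = 0) ∧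
      v = ∑ ℓ ∈ s, (Q ℓ : ℝ) * Real.log ℓ := by
  classical
  rw [Submodule.mem_span_set'] at hv
  obtain ⟨n, f, g, hg⟩ := hv
  choose ℓf hℓf using fun i => (g i).2
  set s : Finset ℕ := Finset.univ.image ℓf with hsdef
  refine ⟨s, fun m => if m ∈ s then ∑ i ∈ Finset.univ.filter (fun i => ℓf i = m), f i else 0,
    ?_, ?_, ?_⟩
  · intro m hm
    obtain ⟨i, _, rfl⟩ := Finset.mem_image.mp hm
    exact ⟨(hℓf i).1, (hℓf i).2.1⟩
  · intro m hm; simp [hm]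
  · rw [← hg]
    have hmaps : ∀ i ∈ (Finset.univ : Finset (Fin n)), ℓf i ∈ s := by
      intro i _; exact Finset.mem_image_of_mem _ (Finset.mem_univ i)
    rw [← Finset.sum_fiberwise_of_maps_to hmaps (fun i => f i • (g i : ℝ))]
    refine (Finset.sum_congr rfl fun m hm => ?_).symm
    beta_reduce
    rw [if_pos hm, Rat.cast_sum, Finset.sum_mul]
    refine Finset.sum_congr rfl fun i hi => ?_
    have h1 : ℓf i = m := (Finset.mem_filter.mp hi).2
    have h2 : (g i : ℝ) = Real.log (ℓf i) := (hℓf i).2.2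
    rw [Rat.smul_def, h2, h1]

/-- If for every prime `p` the difference `x - y` lies in the `ℚ`-span of the
logarithms of the primes different from `p`, then `x = y`. -/
theorem eq_of_sub_mem_all_spans_log_primes (x y : ℝ)
    (hx : ∀ p : ℕ, p.Prime →
      x - y ∈ Submodule.span ℚ {r : ℝ | ∃ ℓ : ℕ, ℓ.Prime ∧ ℓ ≠ p ∧ r = Real.log ℓ}) :
    x = y := by
  classical
  obtain ⟨s, Q, hsp, hQ0, hQ⟩ := span_rep 2 (x - y) (hx 2 Nat.prime_two)
  have hall : ∀ ℓ ∈ s, Q ℓ = 0 := by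
    intro ℓ hℓ
    obtain ⟨hℓp, -⟩ := hsp ℓ hℓ
    obtain ⟨t, Q', htp, hQ'0, hQ'⟩ := span_rep ℓ (x - y) (hx ℓ hℓp)
    have hℓt : ℓ ∉ t := fun hc => (htp ℓ hc).2 rfl
    set u := s ∪ t with hu
    have hup : ∀ m ∈ u, Nat.Prime m := by
      intro m hm
      rcases Finset.mem_union.mp hm with h | h
      · exact (hsp m h).1
      · exact (htp m h).1
    have hzero : ∑ m ∈ u, ((Q m - Q' m : ℚ) : ℝ) * Real.log m = 0 := by
      have e1 : ∑ m ∈ u, ((Q m : ℚ) : ℝ) * Real.log m = x - y := by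
        rw [hQ]
        exact (Finset.sum_subset Finset.subset_union_left
          (fun m _ hm => by rw [hQ0 m hm]; simp) : ∑ m ∈ s, ((Q m : ℚ) : ℝ) * Real.log m = _).symm
      have e2 : ∑ m ∈ u, ((Q' m : ℚ) : ℝ) * Real.log m = x - y := by
        rw [hQ']
        exact (Finset.sum_subset Finset.subset_union_right
          (fun m _ hm => by rw [hQ'0 m hm]; simp) : ∑ m ∈ t, ((Q' m : ℚ) : ℝ) * Real.log m = _).symm
      push_cast
      simp only [sub_mul, Finset.sum_sub_distrib]
      rw [e1, e2, sub_self]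
    have := rat_log_combo u hup (fun m => Q m - Q' m) hzero ℓ
      (Finset.mem_union_left _ hℓ)
    have hq' : Q' ℓ = 0 := hQ'0 ℓ hℓt
    have h3 : Q ℓ - Q' ℓ = 0 := this
    rw [hq'] at h3
    linarith
  have : x - y = 0 := by
    rw [hQ]
    exact Finset.sum_eq_zero fun ℓ hℓ => by rw [hall ℓ hℓ]; simp
  linarith
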